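/- For states in the symmetric subspace the realignment criterion coincides with the PPT criterion: if a bipartite matrix ρ on ℂ^d ⊗ ℂ^d satisfies F ρ = ρ and ρ F = ρ, where F is the swap operator, then ‖R(ρ)‖_tr = ‖ρ^{T₂}‖_tr. -/

import Mathlib

open Matrix Kronecker ComplexOrder

/-- Trace norm `‖X‖_tr = Tr √(X Xᴴ)`. -/
noncomputable def traceNorm {m n : Type*} [Fintype m] [Fintype n] [DecidableEq m]
    (X : Matrix m n ℂ) : ℝ :=
  (((Matrix.posSemidef_self_mul_conjTranspose X).1.eigenvectorUnitary.1 *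
      diagonal (((↑) : ℝ → ℂ) ∘ (√·) ∘ (Matrix.posSemidef_self_mul_conjTranspose X).1.eigenvalues) *
      (star (Matrix.posSemidef_self_mul_conjTranspose X).1.eigenvectorUnitary : Matrix m m ℂ)).trace).re

/-- A density matrix: positive semidefinite with trace 1. -/
def IsDensityMatrix {n : Type*} [Fintype n] (ρ : Matrix n n ℂ) : Prop :=
  ρ.PosSemidef ∧ ρ.trace = 1

/-- The realignment map: `R(ρ)_{(i,j),(k,l)} = ρ_{(i,k),(j,l)}`. -/
def realign {dA dB : ℕ} (ρ : Matrix (Fin dA × Fin dB) (Fin dA × Fin dB) ℂ) :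
    Matrix (Fin dA × Fin dA) (Fin dB × Fin dB) ℂ :=
  fun p q => ρ (p.1, q.1) (p.2, q.2)

/-- Partial transpose on the second subsystem: `(ρ^{T₂})_{(i,k),(j,l)} = ρ_{(i,l),(j,k)}`. -/
def ptranspose2 {d : ℕ} (ρ : Matrix (Fin d × Fin d) (Fin d × Fin d) ℂ) :
    Matrix (Fin d × Fin d) (Fin d × Fin d) ℂ :=
  fun p q => ρ (p.1, q.2) (q.1, p.2)

/-- The swap (exchange) operator `F_{(i,k),(j,l)} = δ_{il} δ_{kj}`. -/
def swapOp (d : ℕ) : Matrix (Fin d × Fin d) (Fin d × Fin d) ℂ :=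
  fun p q => if p.1 = q.2 ∧ p.2 = q.1 then 1 else 0

/-- The unnormalized maximally entangled projector `(|Ω⟩⟨Ω|)_{(i,k),(j,l)} = δ_{ik} δ_{jl}`. -/
def omegaProj (d : ℕ) : Matrix (Fin d × Fin d) (Fin d × Fin d) ℂ :=
  fun p q => if p.1 = p.2 ∧ q.1 = q.2 then 1 else 0

/-- Separability: `ρ` is a finite convex combination of products of density matrices. -/
def IsSeparableState {dA dB : ℕ} (ρ : Matrix (Fin dA × Fin dB) (Fin dA × Fin dB) ℂ) : Prop :=
  ∃ (m : ℕ) (p : Fin m → ℝ) (σ : Fin m → Matrix (Fin dA) (Fin dA) ℂ)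
    (τ : Fin m → Matrix (Fin dB) (Fin dB) ℂ),
    (∀ k, 0 ≤ p k) ∧ (∑ k, p k = 1) ∧ (∀ k, IsDensityMatrix (σ k)) ∧
    (∀ k, IsDensityMatrix (τ k)) ∧ ρ = ∑ k, (p k : ℂ) • (σ k ⊗ₖ τ k)


lemma sqrt_congr {n : Type*} [Fintype n] [DecidableEq n] {A B : Matrix n n ℂ}
    (hA : A.PosSemidef) (hB : B.PosSemidef) (h : A = B) :
    hA.1.eigenvectorUnitary.1 * diagonal (((↑) : ℝ → ℂ) ∘ (√·) ∘ hA.1.eigenvalues) *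
      (star hA.1.eigenvectorUnitary : Matrix n n ℂ) =
    hB.1.eigenvectorUnitary.1 * diagonal (((↑) : ℝ → ℂ) ∘ (√·) ∘ hB.1.eigenvalues) *
      (star hB.1.eigenvectorUnitary : Matrix n n ℂ) := by
  subst h; rfl

lemma mul_swapOp_apply {d : ℕ} (X : Matrix (Fin d × Fin d) (Fin d × Fin d) ℂ)
    (p q : Fin d × Fin d) : (X * swapOp d) p q = X p (q.2, q.1) := by
  simp only [Matrix.mul_apply, swapOp, mul_ite, mul_one, mul_zero]
  rw [show (fun r : Fin d × Fin d => if r.1 = q.2 ∧ r.2 = q.1 then X p r else 0)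
      = fun r => if r = (q.2, q.1) then X p r else 0 from by
    funext r; simp [Prod.ext_iff]]
  simp

lemma swapOp_conjTranspose {d : ℕ} : (swapOp d)ᴴ = swapOp d := by
  ext p q
  simp only [Matrix.conjTranspose_apply, swapOp]
  split_ifs with h h' h' <;> simp_all [and_comm, eq_comm]

lemma swapOp_mul_self {d : ℕ} : swapOp d * swapOp d = 1 := by
  ext p q
  rw [mul_swapOp_apply]
  simp [swapOp, Matrix.one_apply, Prod.ext_iff, and_comm]

/-- For states in the symmetric subspace (`F ρ = ρ F = ρ`), the realignment criterion
coincides with the PPT criterion: `‖R(ρ)‖_tr = ‖ρ^{T₂}‖_tr`. -/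
theorem realign_eq_ppt_on_symmetric_subspace {d : ℕ}
    (ρ : Matrix (Fin d × Fin d) (Fin d × Fin d) ℂ)
    (h1 : swapOp d * ρ = ρ) (h2 : ρ * swapOp d = ρ) :
    traceNorm (realign ρ) = traceNorm (ptranspose2 ρ) := by
  have key : realign ρ = ptranspose2 ρ * swapOp d := by
    ext p q
    rw [mul_swapOp_apply]
    show ρ (p.1, q.1) (p.2, q.2) = ρ (p.1, q.1) (q.2, p.2)
    conv_lhs => rw [← h2]
    rw [mul_swapOp_apply]
  have hmm : realign ρ * (realign ρ)ᴴ = ptranspose2 ρ * (ptranspose2 ρ)ᴴ := by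
    rw [key, Matrix.conjTranspose_mul, swapOp_conjTranspose, Matrix.mul_assoc,
      ← Matrix.mul_assoc (swapOp d), swapOp_mul_self, Matrix.one_mul]
  unfold traceNorm
  rw [sqrt_congr (Matrix.posSemidef_self_mul_conjTranspose _) (Matrix.posSemidef_self_mul_conjTranspose _) hmm]
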